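/- Let T be a tournament on t ≥ 3 vertices and suppose ε > 0 is such that every n-vertex oriented graph with no subdigraph isomorphic to T contains an acyclic set of size at least n^ε (for all n). Then ε ≤ 2/t. -/

import Mathlib

set_option maxHeartbeats 1600000

/-- A directed cycle of length `n` in the digraph with arc relation `A`:
an injective map `f : ZMod n → V` with an arc from each vertex to the next. -/
def IsDicycle {V : Type*} (A : V → V → Prop) (n : ℕ) (f : ZMod n → V) : Prop :=
  0 < n ∧ Function.Injective f ∧ ∀ i, A (f i) (f (i + 1))

/-- A set of vertices is acyclic if it contains no directed cycle. -/
def AcyclicSet {V : Type*} (A : V → V → Prop) (S : Set V) : Prop :=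
  ∀ (n : ℕ) (f : ZMod n → V), (∀ i, f i ∈ S) → ¬ IsDicycle A n f

/-- The dichromatic number: least `k` such that the vertices can be colored with `k`
colors with every color class acyclic. -/
noncomputable def dichromatic {V : Type*} (A : V → V → Prop) : ℕ :=
  sInf {k | ∃ c : V → Fin k, ∀ i, AcyclicSet A (c ⁻¹' {i})}

/-- The maximum size of an acyclic set of vertices. -/
noncomputable def maxAcyclic {V : Type*} [Fintype V] (A : V → V → Prop) : ℕ :=
  sSup {k | ∃ S : Finset V, AcyclicSet A ↑S ∧ S.card = k}

open Finset Filter Asymptotics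
open scoped Classical

namespace St10

lemma cylinder_card {C : Type*} [Fintype C] [DecidableEq C] {q : ℕ} {ι : Type*}
    (I : Finset ι) (h : ι → C) (hinj : Set.InjOn h ↑I) (V : ι → Finset (Fin q)) :
    (Finset.univ.filter fun ω : C → Fin q => ∀ p ∈ I, ω (h p) ∈ V p).card
      = (∏ p ∈ I, (V p).card) * q ^ (Fintype.card C - I.card) := by
  classical
  have hfil : (Finset.univ.filter fun ω : C → Fin q => ∀ p ∈ I, ω (h p) ∈ V p)
      = Fintype.piFinset (fun x => Finset.univ.filter (fun y => ∀ p ∈ I, h p = x → y ∈ V p)) := by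
    ext ω
    simp only [mem_filter, mem_univ, true_and, Fintype.mem_piFinset]
    constructor
    · intro H x p hp hx
      exact hx ▸ H p hp
    · intro H p hp
      exact H (h p) p hp rfl
  rw [hfil, Fintype.card_piFinset]
  rw [← Finset.prod_mul_prod_compl (I.image h)]
  have h1 : (∏ x ∈ I.image h,
        (Finset.univ.filter (fun y : Fin q => ∀ p ∈ I, h p = x → y ∈ V p)).card)
      = ∏ p ∈ I, (V p).card := by
    rw [Finset.prod_image (fun a ha b hb hab => hinj ha hb hab)]
    apply Finset.prod_congr rfl
    intro p hp
    congr 1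
    ext y
    rw [mem_filter]
    constructor
    · intro H; exact H.2 p hp rfl
    · intro hy
      refine ⟨mem_univ _, fun p' hp' hpp' => ?_⟩
      have : p' = p := hinj hp' hp hpp'
      rwa [this]
  have h2 : (∏ x ∈ (I.image h)ᶜ,
        (Finset.univ.filter (fun y : Fin q => ∀ p ∈ I, h p = x → y ∈ V p)).card)
      = q ^ (Fintype.card C - I.card) := by
    rw [Finset.prod_congr rfl (fun x hx => ?_), Finset.prod_const]
    · rw [Finset.card_compl, Finset.card_image_of_injOn hinj]
    · show _ = q
      have : (Finset.univ.filter (fun y : Fin q => ∀ p ∈ I, h p = x → y ∈ V p))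
          = Finset.univ := by
        ext y
        simp only [mem_filter, mem_univ, true_and, iff_true]
        intro p hp hpx
        exact absurd (Finset.mem_image.mpr ⟨p, hp, hpx⟩) (Finset.mem_compl.mp hx)
      rw [this, Finset.card_univ, Fintype.card_fin]
  rw [h1, h2]

lemma two_mul_card_lt_pairs (s : ℕ) :
    2 * ((Finset.univ.filter fun p : Fin s × Fin s => p.1 < p.2).card) = s * (s - 1) := by
  classical
  have hcard : (Finset.univ.filter fun p : Fin s × Fin s => p.1 < p.2).card
      = (Finset.univ.filter fun p : Fin s × Fin s => p.2 < p.1).card := by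
    apply Finset.card_bij (fun p _ => (p.2, p.1))
    · intro p hp; simp only [mem_filter, mem_univ, true_and] at hp ⊢; exact hp
    · intro p hp p' hp' he
      simp only [Prod.mk.injEq] at he
      exact Prod.ext he.2 he.1
    · intro p hp
      exact ⟨(p.2, p.1), by simp only [mem_filter, mem_univ, true_and] at hp ⊢; exact hp, rfl⟩
  have hunion : (Finset.univ.filter fun p : Fin s × Fin s => p.1 < p.2)
      ∪ (Finset.univ.filter fun p : Fin s × Fin s => p.2 < p.1)
      = (Finset.univ : Finset (Fin s)).offDiag := by
    ext p
    rw [Finset.mem_union, Finset.mem_offDiag, mem_filter, mem_filter]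
    constructor
    · rintro (⟨-, h⟩ | ⟨-, h⟩)
      · exact ⟨mem_univ _, mem_univ _, ne_of_lt h⟩
      · exact ⟨mem_univ _, mem_univ _, (ne_of_lt h).symm⟩
    · rintro ⟨-, -, h⟩
      rcases lt_or_gt_of_ne h with h' | h'
      · exact Or.inl ⟨mem_univ _, h'⟩
      · exact Or.inr ⟨mem_univ _, h'⟩
  have hdisj : Disjoint (Finset.univ.filter fun p : Fin s × Fin s => p.1 < p.2)
      (Finset.univ.filter fun p : Fin s × Fin s => p.2 < p.1) := by
    rw [Finset.disjoint_filter]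
    intro p _ h1 h2
    exact absurd h1 (not_lt.mpr (le_of_lt h2))
  have hu := Finset.card_union_of_disjoint hdisj
  rw [hunion, Finset.offDiag_card, Finset.card_univ, Fintype.card_fin] at hu
  have hs : s * (s - 1) = s * s - s := by
    cases s with
    | zero => simp
    | succ k => rw [Nat.succ_sub_one]; ring_nf; omega
  omega


def ltpairs (k : ℕ) : Finset (Fin k × Fin k) := Finset.univ.filter (fun p => p.1 < p.2)

lemma two_mul_ltpairs (s : ℕ) : 2 * (ltpairs s).card = s * (s - 1) :=
  two_mul_card_lt_pairs s

lemma acyclic_image {V W : Type*} (A : V → V → Prop) (A' : W → W → Prop) (f : W → V)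
    (hf : Function.Injective f) (harc : ∀ a b, A (f a) (f b) → A' a b)
    (S : Set W) (hS : AcyclicSet A' S) : AcyclicSet A (f '' S) := by
  rintro k g hg ⟨hk, hinj, hcyc⟩
  choose ψ hψS hψ using fun i => hg i
  refine hS k ψ hψS ⟨hk, ?_, ?_⟩
  · intro a b hab
    apply hinj
    rw [← hψ a, ← hψ b, hab]
  · intro i
    apply harc
    rw [hψ i, hψ (i+1)]
    exact hcyc i



lemma acyclic_subset {V : Type*} (A : V → V → Prop) {S U : Set V} (hSU : S ⊆ U)
    (hU : AcyclicSet A U) : AcyclicSet A S :=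
  fun n f hf => hU n f (fun i => hSU (hf i))

/-- An acyclic finite set has a source: a vertex with no in-arc from the set. -/
lemma exists_source {V : Type*} (A : V → V → Prop) (S : Finset V) (hne : S.Nonempty)
    (hS : AcyclicSet A ↑S) : ∃ x ∈ S, ∀ y ∈ S, ¬ A y x := by
  by_contra hcon
  push_neg at hcon
  have hg : ∀ x : V, x ∈ S → ∃ y, y ∈ S ∧ A y x := by
    intro x hx
    obtain ⟨y, hy, hAy⟩ := hcon x hx
    exact ⟨y, hy, hAy⟩
  obtain ⟨x₀, hx₀⟩ := hne
  set g : V → V := fun x => if hx : x ∈ S then (hg x hx).choose else x with hgdef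
  have hgmem : ∀ x, x ∈ S → g x ∈ S := by
    intro x hx; rw [hgdef]; simp only [hx, dif_pos]; exact (hg x hx).choose_spec.1
  have hgarc : ∀ x, x ∈ S → A (g x) x := by
    intro x hx; rw [hgdef]; simp only [hx, dif_pos]; exact (hg x hx).choose_spec.2
  set u : ℕ → V := fun k => g^[k] x₀ with hudef
  have humem : ∀ k, u k ∈ S := by
    intro k
    induction k with
    | zero => exact hx₀
    | succ k ih =>
      show g^[k+1] x₀ ∈ S
      rw [Function.iterate_succ_apply']
      exact hgmem _ ih
  have huarc : ∀ k, A (u (k + 1)) (u k) := by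
    intro k
    have : u (k+1) = g (u k) := by
      show g^[k+1] x₀ = _
      rw [Function.iterate_succ_apply']
    rw [this]
    exact hgarc _ (humem k)
  have hrep : ∃ j, ∃ i < j, u i = u j := by
    obtain ⟨a, ha, b, hb, hab, he⟩ :=
      Finset.exists_ne_map_eq_of_card_lt_of_maps_to
        (s := Finset.range (S.card + 1)) (t := S)
        (by rw [Finset.card_range]; omega) (fun a _ => humem a)
    rcases Nat.lt_or_ge a b with h' | h'
    · exact ⟨b, a, h', he⟩
    · exact ⟨a, b, lt_of_le_of_ne h' (Ne.symm hab), he.symm⟩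
  set J := Nat.find hrep with hJdef
  obtain ⟨i₀, hi₀J, hi₀⟩ := Nat.find_spec hrep
  rw [← hJdef] at hi₀ hi₀J
  have hmin : ∀ j' < J, ¬ ∃ i < j', u i = u j' := fun j' hj' => Nat.find_min hrep hj'
  have hinjOn : ∀ a b, a < J → b < J → u a = u b → a = b := by
    intro a b ha hb he
    by_contra hne'
    rcases Nat.lt_or_ge a b with h' | h'
    · exact hmin b hb ⟨a, h', he⟩
    · exact hmin a ha ⟨b, lt_of_le_of_ne h' (Ne.symm hne'), he.symm⟩
  set L := J - i₀ with hLdef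
  have hL : 0 < L := by omega
  have : NeZero L := ⟨by omega⟩
  set f : ZMod L → V := fun l => u (i₀ + (L - 1 - l.val)) with hfdef
  have hvallt : ∀ l : ZMod L, l.val < L := fun l => ZMod.val_lt l
  have hvaladd : ∀ l : ZMod L, (l + 1).val = (l.val + 1) % L := by
    intro l
    rw [ZMod.val_add, ZMod.val_one_eq_one_mod]
    conv_rhs => rw [Nat.add_mod]
    rw [Nat.mod_eq_of_lt (hvallt l)]
  have hidxlt : ∀ l : ZMod L, i₀ + (L - 1 - l.val) < J := by
    intro l; have := hvallt l; omega
  have hfinj : Function.Injective f := by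
    intro a b he
    have h1 := hvallt a
    have h2 := hvallt b
    have h3 := hinjOn _ _ (hidxlt a) (hidxlt b) he
    have : a.val = b.val := by omega
    exact ZMod.val_injective L this
  have hfmem : ∀ l, f l ∈ (↑S : Set V) := fun l => humem _
  have hcyc : ∀ l : ZMod L, A (f l) (f (l + 1)) := by
    intro l
    rcases Nat.lt_or_ge (l.val + 1) L with hlt | hge
    · have hv : (l + 1).val = l.val + 1 := by rw [hvaladd l, Nat.mod_eq_of_lt hlt]
      show A (u (i₀ + (L - 1 - l.val))) (u (i₀ + (L - 1 - (l+1).val)))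
      rw [hv]
      have he : i₀ + (L - 1 - l.val) = (i₀ + (L - 1 - (l.val + 1))) + 1 := by omega
      rw [he]
      exact huarc _
    · have h1 := hvallt l
      have hv0 : l.val = L - 1 := by omega
      have hv : (l + 1).val = 0 := by
        rw [hvaladd l, show l.val + 1 = L by omega, Nat.mod_self]
      show A (u (i₀ + (L - 1 - l.val))) (u (i₀ + (L - 1 - (l+1).val)))
      rw [hv, hv0]
      have he1 : i₀ + (L - 1 - (L - 1)) = i₀ := by omega
      have he2 : i₀ + (L - 1 - 0) = J - 1 := by omega
      rw [he1, he2, hi₀]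
      have harc := huarc (J - 1)
      rw [show J - 1 + 1 = J by omega] at harc
      exact harc
  exact hS L f hfmem ⟨hL, hfinj, hcyc⟩

/-- An acyclic finite set admits a topological ordering. -/
lemma exists_topo {V : Type*} (A : V → V → Prop) :
    ∀ (k : ℕ) (S : Finset V), S.card = k → AcyclicSet A ↑S →
    ∃ v : Fin k → V, Function.Injective v ∧ (∀ i, v i ∈ S) ∧
      ∀ i j : Fin k, i < j → ¬ A (v j) (v i) := by
  intro k
  induction k with
  | zero =>
    intro S _ _
    exact ⟨Fin.elim0, fun i => i.elim0, fun i => i.elim0, fun i => i.elim0⟩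
  | succ k ih =>
    intro S hcard hS
    have hne : S.Nonempty := by rw [← Finset.card_pos, hcard]; omega
    obtain ⟨x, hxS, hx⟩ := exists_source A S hne hS
    have hcard' : (S.erase x).card = k := by
      rw [Finset.card_erase_of_mem hxS, hcard]
      omega
    have hS' : AcyclicSet A ↑(S.erase x) :=
      acyclic_subset A (by exact_mod_cast Finset.erase_subset x S) hS
    obtain ⟨w, hwinj, hwmem, hwtopo⟩ := ih (S.erase x) hcard' hS'
    refine ⟨Fin.cons x w, ?_, ?_, ?_⟩
    · rw [Fin.cons_injective_iff]
      refine ⟨?_, hwinj⟩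
      rintro ⟨i, hi⟩
      exact (Finset.ne_of_mem_erase (hwmem i)) hi
    · intro i
      induction i using Fin.cases with
      | zero => simpa using hxS
      | succ i => simpa using Finset.mem_of_mem_erase (hwmem i)
    · intro i j hij
      induction j using Fin.cases with
      | zero => exact absurd hij (by simp [Fin.lt_def])
      | succ j =>
        induction i using Fin.cases with
        | zero =>
          simp only [Fin.cons_succ, Fin.cons_zero]
          exact hx _ (Finset.mem_of_mem_erase (hwmem j))
        | succ i =>
          simp only [Fin.cons_succ]
          apply hwtopo
          exact Fin.succ_lt_succ_iff.mp hij
  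
def key {n : ℕ} (u v : Fin n) : Fin n × Fin n := if u < v then (u, v) else (v, u)

def aval {q : ℕ} (hq : 2 ≤ q) {n : ℕ} (u v : Fin n) : Fin q :=
  if u < v then ⟨0, by omega⟩ else ⟨1, by omega⟩

def Arc {n q : ℕ} (hq : 2 ≤ q) (ω : Fin n × Fin n → Fin q) (u v : Fin n) : Prop :=
  u ≠ v ∧ ω (key u v) = aval hq u v

lemma key_comm {n : ℕ} (u v : Fin n) : key u v = key v u := by
  unfold key
  rcases lt_trichotomy u v with h | h | h
  · rw [if_pos h, if_neg (asymm h)]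
  · subst h; simp
  · rw [if_neg (asymm h), if_pos h]

lemma key_cases {n : ℕ} {u v u' v' : Fin n} (h : key u v = key u' v') :
    (u = u' ∧ v = v') ∨ (u = v' ∧ v = u') := by
  unfold key at h
  by_cases h1 : u < v <;> by_cases h2 : u' < v' <;>
    simp only [h1, h2, if_pos, if_neg, if_true, if_false, Prod.ext_iff] at h <;> tauto

lemma arc_asymm {n q : ℕ} (hq : 2 ≤ q) (ω : Fin n × Fin n → Fin q) :
    ∀ u v, Arc hq ω u v → ¬ Arc hq ω v u := by
  rintro u v ⟨hne, he⟩ ⟨hne', he'⟩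
  rw [key_comm v u, he] at he'
  by_cases h : u < v
  · have h' : ¬ v < u := asymm h
    simp only [aval, h, h', if_true, if_false, Fin.mk.injEq] at he'
    omega
  · have h' : v < u := lt_of_le_of_ne (not_lt.mp h) hne.symm
    simp only [aval, h, h', if_true, if_false, Fin.mk.injEq] at he'
    omega

lemma not_arc_iff {n q : ℕ} (hq : 2 ≤ q) (ω : Fin n × Fin n → Fin q) {u v : Fin n}
    (hne : u ≠ v) : ¬ Arc hq ω u v ↔ ω (key u v) ≠ aval hq u v := by
  simp [Arc, hne]

lemma good_omega (n t s q : ℕ) (hq : 2 ≤ q) (hn : 0 < n) (htn : t ≤ n) (hsn : s ≤ n)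
    (ht1 : 1 ≤ t)
    (T : Fin t → Fin t → Prop) (hT2 : ∀ u v : Fin t, u ≠ v → T u v ∨ T v u)
    (H1 : 8 * n ^ (t - 1) ≤ q ^ (ltpairs t).card)
    (H2 : 2 * n ^ s * (q - 1) ^ (ltpairs s).card ≤ q ^ (ltpairs s).card) :
    ∃ ω : Fin n × Fin n → Fin q,
      (¬ ∃ v : Fin s → Fin n, Function.Injective v ∧
          ∀ i j : Fin s, i < j → ¬ Arc hq ω (v j) (v i)) ∧
      2 * (Finset.univ.filter (fun g : Fin t → Fin n => Function.Injective g ∧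
          ∀ i j, T i j → Arc hq ω (g i) (g j))).card < n := by
  classical
  set N := n * n with hN
  have hcardC : Fintype.card (Fin n × Fin n) = N := by simp [hN]
  have hcardΩ : Fintype.card (Fin n × Fin n → Fin q) = q ^ N := by
    rw [Fintype.card_fun, Fintype.card_fin, hcardC]
  set cT := (ltpairs t).card with hcT
  set cS := (ltpairs s).card with hcS
  have hcTN : cT ≤ N := by
    calc cT ≤ Fintype.card (Fin t × Fin t) := by
          rw [hcT]; exact (Finset.card_filter_le _ _).trans (by rw [Finset.card_univ])
      _ = t * t := by simp
      _ ≤ N := Nat.mul_le_mul htn htn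
  have hcSN : cS ≤ N := by
    calc cS ≤ Fintype.card (Fin s × Fin s) := by
          rw [hcS]; exact (Finset.card_filter_le _ _).trans (by rw [Finset.card_univ])
      _ = s * s := by simp
      _ ≤ N := Nat.mul_le_mul hsn hsn
  -- copy count per injective g
  have copy_bound : ∀ g : Fin t → Fin n, Function.Injective g →
      (Finset.univ.filter (fun ω : Fin n × Fin n → Fin q =>
        Function.Injective g ∧ ∀ i j, T i j → Arc hq ω (g i) (g j))).card
        ≤ q ^ (N - cT) := by
    intro g hg
    have hsub : (Finset.univ.filter (fun ω : Fin n × Fin n → Fin q =>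
        Function.Injective g ∧ ∀ i j, T i j → Arc hq ω (g i) (g j)))
        ⊆ (Finset.univ.filter fun ω : Fin n × Fin n → Fin q =>
          ∀ p ∈ ltpairs t, ω (key (g p.1) (g p.2))
            ∈ ({if T p.1 p.2 then aval hq (g p.1) (g p.2) else aval hq (g p.2) (g p.1)}
              : Finset (Fin q))) := by
      intro ω hω
      rw [Finset.mem_filter] at hω ⊢
      refine ⟨Finset.mem_univ _, ?_⟩
      intro p hp
      rw [ltpairs, Finset.mem_filter] at hp
      have hne : p.1 ≠ p.2 := ne_of_lt hp.2
      rw [Finset.mem_singleton]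
      by_cases hT : T p.1 p.2
      · rw [if_pos hT]
        exact (hω.2.2 p.1 p.2 hT).2
      · rw [if_neg hT]
        have hT' : T p.2 p.1 := (hT2 p.1 p.2 hne).resolve_left hT
        have := (hω.2.2 p.2 p.1 hT').2
        rwa [key_comm (g p.2) (g p.1)] at this
    have hinj : Set.InjOn (fun p : Fin t × Fin t => key (g p.1) (g p.2)) ↑(ltpairs t) := by
      intro p hp p' hp' he
      simp only [Finset.coe_filter, ltpairs, Set.mem_setOf_eq] at hp hp'
      rcases key_cases he with ⟨h1, h2⟩ | ⟨h1, h2⟩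
      · exact Prod.ext (hg h1) (hg h2)
      · have e1 : p.1 = p'.2 := hg h1
        have e2 : p.2 = p'.1 := hg h2
        exfalso
        rw [e1, e2] at hp
        exact absurd hp'.2 (asymm hp.2)
    calc _ ≤ _ := Finset.card_le_card hsub
      _ = (∏ p ∈ ltpairs t, ({if T p.1 p.2 then aval hq (g p.1) (g p.2)
            else aval hq (g p.2) (g p.1)} : Finset (Fin q)).card) * q ^ (N - cT) := by
          have hc := cylinder_card (ltpairs t) (fun p => key (g p.1) (g p.2)) hinj
            (fun p => ({if T p.1 p.2 then aval hq (g p.1) (g p.2)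
              else aval hq (g p.2) (g p.1)} : Finset (Fin q)))
          convert hc using 3
          rw [hcardC]
      _ = q ^ (N - cT) := by
          rw [Finset.prod_congr rfl (fun p _ => Finset.card_singleton _),
            Finset.prod_const_one, one_mul]
  -- sum over ω of copy counts
  have sum_copies : (∑ ω : Fin n × Fin n → Fin q,
      (Finset.univ.filter (fun g : Fin t → Fin n => Function.Injective g ∧
          ∀ i j, T i j → Arc hq ω (g i) (g j))).card) ≤ n ^ t * q ^ (N - cT) := by
    have hswap : (∑ ω : Fin n × Fin n → Fin q,
        (Finset.univ.filter (fun g : Fin t → Fin n => Function.Injective g ∧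
            ∀ i j, T i j → Arc hq ω (g i) (g j))).card)
        = ∑ g : Fin t → Fin n,
          (Finset.univ.filter (fun ω : Fin n × Fin n → Fin q => Function.Injective g ∧
            ∀ i j, T i j → Arc hq ω (g i) (g j))).card := by
      simp only [Finset.card_filter]
      rw [Finset.sum_comm]
    rw [hswap]
    calc _ ≤ ∑ _g : Fin t → Fin n, q ^ (N - cT) := by
          apply Finset.sum_le_sum
          intro g _
          by_cases hg : Function.Injective g
          · exact copy_bound g hg
          · have : (Finset.univ.filter (fun ω : Fin n × Fin n → Fin q =>
                Function.Injective g ∧ ∀ i j, T i j → Arc hq ω (g i) (g j))) = ∅ := by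
              apply Finset.filter_false_of_mem
              intro ω _
              exact fun hc => hg hc.1
            rw [this]
            simp
      _ = n ^ t * q ^ (N - cT) := by
          rw [Finset.sum_const, Finset.card_univ, Fintype.card_fun, Fintype.card_fin,
            Fintype.card_fin, smul_eq_mul]
  -- bad acyclic-ordering event
  set B := (Finset.univ.filter (fun ω : Fin n × Fin n → Fin q =>
      ∃ v : Fin s → Fin n, Function.Injective v ∧
        ∀ i j : Fin s, i < j → ¬ Arc hq ω (v j) (v i))) with hB
  have card_B : B.card ≤ n ^ s * ((q - 1) ^ cS * q ^ (N - cS)) := by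
    have hsub : B ⊆ Finset.univ.biUnion (fun v : Fin s → Fin n =>
        Finset.univ.filter (fun ω : Fin n × Fin n → Fin q =>
          Function.Injective v ∧ ∀ i j : Fin s, i < j → ¬ Arc hq ω (v j) (v i))) := by
      intro ω hω
      rw [hB, Finset.mem_filter] at hω
      obtain ⟨-, v, hv1, hv2⟩ := hω
      rw [Finset.mem_biUnion]
      exact ⟨v, Finset.mem_univ _, by rw [Finset.mem_filter]; exact ⟨Finset.mem_univ _, hv1, hv2⟩⟩
    calc B.card ≤ _ := Finset.card_le_card hsub
      _ ≤ ∑ v : Fin s → Fin n, (Finset.univ.filter (fun ω : Fin n × Fin n → Fin q =>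
          Function.Injective v ∧ ∀ i j : Fin s, i < j → ¬ Arc hq ω (v j) (v i))).card :=
        Finset.card_biUnion_le
      _ ≤ ∑ _v : Fin s → Fin n, (q - 1) ^ cS * q ^ (N - cS) := by
          apply Finset.sum_le_sum
          intro v _
          by_cases hv : Function.Injective v
          · -- cylinder bound
            have hsub2 : (Finset.univ.filter (fun ω : Fin n × Fin n → Fin q =>
                Function.Injective v ∧ ∀ i j : Fin s, i < j → ¬ Arc hq ω (v j) (v i)))
                ⊆ (Finset.univ.filter fun ω : Fin n × Fin n → Fin q =>
                  ∀ p ∈ ltpairs s, ω (key (v p.1) (v p.2))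
                    ∈ (Finset.univ.erase (aval hq (v p.2) (v p.1)))) := by
              intro ω hω
              rw [Finset.mem_filter] at hω ⊢
              refine ⟨Finset.mem_univ _, ?_⟩
              intro p hp
              rw [ltpairs, Finset.mem_filter] at hp
              have hlt := hp.2
              have hne : v p.2 ≠ v p.1 := fun he => absurd (hv he) (ne_of_gt hlt)
              have hnarc := hω.2.2 p.1 p.2 hlt
              rw [not_arc_iff hq ω hne] at hnarc
              rw [Finset.mem_erase]
              rw [key_comm (v p.2) (v p.1)] at hnarc
              exact ⟨hnarc, Finset.mem_univ _⟩
            have hinj : Set.InjOn (fun p : Fin s × Fin s => key (v p.1) (v p.2))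
                ↑(ltpairs s) := by
              intro p hp p' hp' he
              simp only [Finset.coe_filter, ltpairs, Set.mem_setOf_eq] at hp hp'
              rcases key_cases he with ⟨h1, h2⟩ | ⟨h1, h2⟩
              · exact Prod.ext (hv h1) (hv h2)
              · have e1 : p.1 = p'.2 := hv h1
                have e2 : p.2 = p'.1 := hv h2
                exfalso
                rw [e1, e2] at hp
                exact absurd hp'.2 (asymm hp.2)
            calc _ ≤ _ := Finset.card_le_card hsub2
              _ = (∏ p ∈ ltpairs s,
                    (Finset.univ.erase (aval hq (v p.2) (v p.1))).card) * q ^ (N - cS) := by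
                  have hc := cylinder_card (ltpairs s) (fun p => key (v p.1) (v p.2)) hinj
                    (fun p => Finset.univ.erase (aval hq (v p.2) (v p.1)))
                  convert hc using 3
                  rw [hcardC]
              _ = (q - 1) ^ cS * q ^ (N - cS) := by
                  rw [Finset.prod_congr rfl (fun p _ => ?_), Finset.prod_const, hcS]
                  rw [Finset.card_erase_of_mem (Finset.mem_univ _), Finset.card_univ,
                    Fintype.card_fin]
          · have : (Finset.univ.filter (fun ω : Fin n × Fin n → Fin q =>
                Function.Injective v ∧ ∀ i j : Fin s, i < j → ¬ Arc hq ω (v j) (v i))) = ∅ := by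
              apply Finset.filter_false_of_mem
              intro ω _
              exact fun hc => hv hc.1
            rw [this]
            simp
      _ = n ^ s * ((q - 1) ^ cS * q ^ (N - cS)) := by
          rw [Finset.sum_const, Finset.card_univ, Fintype.card_fun, Fintype.card_fin,
            Fintype.card_fin, smul_eq_mul]
  -- existence by averaging
  by_contra hcon
  have hA : ∀ ω : Fin n × Fin n → Fin q, ω ∉ B →
      n ≤ 2 * (Finset.univ.filter (fun g : Fin t → Fin n => Function.Injective g ∧
          ∀ i j, T i j → Arc hq ω (g i) (g j))).card := by
    intro ω hω
    have hP : ¬ ∃ v : Fin s → Fin n, Function.Injective v ∧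
        ∀ i j : Fin s, i < j → ¬ Arc hq ω (v j) (v i) := by
      intro hex
      exact hω (by rw [hB, Finset.mem_filter]; exact ⟨Finset.mem_univ _, hex⟩)
    by_contra hlt
    exact hcon ⟨ω, hP, lt_of_not_ge hlt⟩
  have hBsub : B ⊆ Finset.univ := Finset.subset_univ _
  have hcard_sdiff : (Finset.univ \ B).card = q ^ N - B.card := by
    rw [Finset.card_sdiff_of_subset hBsub, Finset.card_univ, hcardΩ]
  have h1 : n * (q ^ N - B.card) ≤ 2 * (∑ ω : Fin n × Fin n → Fin q,
      (Finset.univ.filter (fun g : Fin t → Fin n => Function.Injective g ∧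
          ∀ i j, T i j → Arc hq ω (g i) (g j))).card) := by
    calc n * (q ^ N - B.card) = (Finset.univ \ B).card • n := by
          rw [hcard_sdiff, smul_eq_mul, mul_comm]
      _ ≤ ∑ ω ∈ Finset.univ \ B, 2 * (Finset.univ.filter (fun g : Fin t → Fin n =>
            Function.Injective g ∧ ∀ i j, T i j → Arc hq ω (g i) (g j))).card :=
          Finset.card_nsmul_le_sum _ _ _ (fun ω hω => hA ω (Finset.mem_sdiff.mp hω).2)
      _ ≤ ∑ ω : Fin n × Fin n → Fin q, 2 * (Finset.univ.filter (fun g : Fin t → Fin n =>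
            Function.Injective g ∧ ∀ i j, T i j → Arc hq ω (g i) (g j))).card :=
          Finset.sum_le_sum_of_subset Finset.sdiff_subset
      _ = 2 * (∑ ω : Fin n × Fin n → Fin q,
            (Finset.univ.filter (fun g : Fin t → Fin n => Function.Injective g ∧
              ∀ i j, T i j → Arc hq ω (g i) (g j))).card) := by
          rw [Finset.mul_sum]
  -- numeric bounds
  have e1 : q ^ cT * q ^ (N - cT) = q ^ N := by
    rw [← pow_add, Nat.add_sub_cancel' hcTN]
  have e2 : q ^ cS * q ^ (N - cS) = q ^ N := by
    rw [← pow_add, Nat.add_sub_cancel' hcSN]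
  have ent : n ^ t = n ^ (t - 1) * n := by
    conv_lhs => rw [← Nat.sub_add_cancel ht1]
    rw [pow_succ]
  have b1 : 8 * (n ^ t * q ^ (N - cT)) ≤ n * q ^ N := by
    calc 8 * (n ^ t * q ^ (N - cT)) = (8 * n ^ (t-1)) * q ^ (N - cT) * n := by
          rw [ent]; ring
      _ ≤ q ^ cT * q ^ (N - cT) * n := by gcongr
      _ = n * q ^ N := by rw [e1]; ring
  have b2 : 4 * (n * (n ^ s * ((q - 1) ^ cS * q ^ (N - cS)))) ≤ 2 * (n * q ^ N) := by
    calc 4 * (n * (n ^ s * ((q - 1) ^ cS * q ^ (N - cS))))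
        = 2 * n * ((2 * n ^ s * (q-1) ^ cS) * q ^ (N - cS)) := by ring
      _ ≤ 2 * n * (q ^ cS * q ^ (N - cS)) := by gcongr
      _ = 2 * (n * q ^ N) := by rw [e2]; ring
  have hBK : n * B.card ≤ n * (n ^ s * ((q - 1) ^ cS * q ^ (N - cS))) :=
    Nat.mul_le_mul_left n card_B
  have hq0 : 0 < q ^ N := pow_pos (lt_of_lt_of_le (by norm_num) hq) N
  have hBle : B.card ≤ q ^ N := by
    calc B.card ≤ (Finset.univ : Finset (Fin n × Fin n → Fin q)).card :=
        Finset.card_le_card hBsub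
      _ = q ^ N := by rw [Finset.card_univ, hcardΩ]
  -- final arithmetic
  set SX := (∑ ω : Fin n × Fin n → Fin q,
      (Finset.univ.filter (fun g : Fin t → Fin n => Function.Injective g ∧
          ∀ i j, T i j → Arc hq ω (g i) (g j))).card) with hSX
  set K1 := n ^ t * q ^ (N - cT) with hK1
  set K2 := n * (n ^ s * ((q - 1) ^ cS * q ^ (N - cS))) with hK2
  set QN := q ^ N with hQN
  set Bc := B.card with hBc
  have hsplit : n * (QN - Bc) + n * Bc = n * QN := by
    rw [← Nat.mul_add, Nat.sub_add_cancel hBle]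
  have hpos : 0 < n * QN := Nat.mul_pos hn hq0
  have h8 : 8 * SX ≤ 8 * K1 := Nat.mul_le_mul_left 8 sum_copies
  have h4 : 4 * (n * Bc) ≤ 4 * K2 := Nat.mul_le_mul_left 4 hBK
  have h2' : 4 * (n * (QN - Bc)) ≤ 8 * SX := by
    calc 4 * (n * (QN - Bc)) ≤ 4 * (2 * SX) := Nat.mul_le_mul_left 4 h1
      _ = 8 * SX := by ring
  have hEq : 4 * (n * QN) = 4 * (n * (QN - Bc)) + 4 * (n * Bc) := by
    rw [← Nat.mul_add, hsplit]
  have final : 4 * (n * QN) ≤ 3 * (n * QN) := by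
    calc 4 * (n * QN) = 4 * (n * (QN - Bc)) + 4 * (n * Bc) := hEq
      _ ≤ 8 * K1 + 4 * K2 := add_le_add (h2'.trans h8) h4
      _ ≤ n * QN + 2 * (n * QN) := add_le_add b1 b2
      _ = 3 * (n * QN) := by ring
  exact absurd final (not_le.mpr ((Nat.mul_lt_mul_right hpos).mpr (by norm_num)))



lemma log_four_le_two : Real.log 4 ≤ 2 := by
  have h2 : (2:ℝ) ≤ Real.exp 1 := by
    have := Real.add_one_le_exp 1
    linarith
  have : (4:ℝ) ≤ Real.exp 2 := by
    have := mul_le_mul h2 h2 (by norm_num) (Real.exp_nonneg 1)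
    rw [← Real.exp_add] at this
    norm_num at this ⊢
    linarith
  calc Real.log 4 ≤ Real.log (Real.exp 2) :=
        Real.log_le_log (by norm_num) this
    _ = 2 := Real.log_exp 2

lemma H2_of (m t r cS : ℕ) (hm : 2 ≤ m) (ht : 1 ≤ t) (hr1 : 1 ≤ r)
    (hr : 4 * (t:ℝ) * Real.log m + 5 ≤ (r:ℝ))
    (hcS : 2 * cS = (m^2*r) * (m^2*r - 1)) :
    2 * (m^t)^(m^2*r) * (2*m^2 - 1)^cS ≤ (2*m^2)^cS := by
  rw [← Nat.pow_le_pow_iff_left (n := 2) (by norm_num)]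
  have hexp : ∀ x : ℕ, (x ^ cS)^2 = x ^ ((m^2*r) * (m^2*r - 1)) := by
    intro x
    rw [← pow_mul, mul_comm cS 2, hcS]
  have hexp2 : (2 * (m^t)^(m^2*r))^2 = 4*(m^t)^(2*(m^2*r)) := by
    rw [mul_pow, ← pow_mul, mul_comm (m^2*r) 2]
    norm_num
  rw [mul_pow, hexp2, hexp, hexp]
  set sN := m^2*r with hsN
  set eN := sN * (sN - 1) with heN
  have hsN4 : 4 ≤ sN := by
    calc 4 = 4 * 1 := by norm_num
      _ ≤ m^2 * r := Nat.mul_le_mul (by nlinarith) hr1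
  -- cast to ℝ
  have hcast : ((2*m^2 - 1 : ℕ) : ℝ) = 2*(m:ℝ)^2 - 1 := by
    have : (1:ℕ) ≤ 2*m^2 := by nlinarith
    push_cast [Nat.cast_sub this]
    ring
  rw [← Nat.cast_le (α := ℝ)]
  push_cast [hcast]
  set M := (m:ℝ) with hM
  have hM2 : (2:ℝ) ≤ M := by rw [hM]; exact_mod_cast hm
  have hM1 : (1:ℝ) ≤ M := by linarith
  have hlogM : 0 ≤ Real.log M := Real.log_nonneg hM1
  set Q : ℝ := 2*M^2 with hQ
  have hQ8 : (8:ℝ) ≤ Q := by nlinarith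
  have hQ1 : (1:ℝ) < Q := by linarith
  have hQm1 : (0:ℝ) < Q - 1 := by linarith
  have hQpos : (0:ℝ) < Q := by linarith
  -- `key1`
  have key1 : Real.exp (1/Q) ≤ Q/(Q-1) := by
    have h1 : 1 - 1/Q ≤ Real.exp (-(1/Q)) := by
      have := Real.add_one_le_exp (-(1/Q))
      linarith
    have h2 : (0:ℝ) < 1 - 1/Q := by
      rw [sub_pos, div_lt_one hQpos]; linarith
    have h3 : Real.exp (1/Q) = 1 / Real.exp (-(1/Q)) := by
      rw [Real.exp_neg]; field_simp
    rw [h3]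
    calc 1 / Real.exp (-(1/Q)) ≤ 1 / (1 - 1/Q) := by
          apply one_div_le_one_div_of_le h2 h1
      _ = Q/(Q-1) := by field_simp
  -- `key2`
  have hpow_pos : (0:ℝ) < 4 * (M^t)^(2*sN) := by positivity
  have key2 : 4 * (M^t)^(2*sN) ≤ Real.exp ((eN:ℝ) / Q) := by
    rw [← Real.log_le_iff_le_exp hpow_pos]
    have hlog : Real.log (4 * (M^t)^(2*sN))
        = Real.log 4 + (2*sN : ℕ) * ((t:ℕ) * Real.log M) := by
      rw [Real.log_mul (by norm_num) (by positivity), Real.log_pow, Real.log_pow]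
    rw [hlog]
    have hsN1 : (1:ℝ) ≤ (sN:ℝ) := by exact_mod_cast le_trans (by norm_num) hsN4
    have hsN1' : (1:ℕ) ≤ sN := le_trans (by norm_num : (1:ℕ) ≤ 4) hsN4
    have heNcast : (eN:ℝ) = (sN:ℝ) * ((sN:ℝ) - 1) := by
      rw [heN, Nat.cast_mul, Nat.cast_sub hsN1', Nat.cast_one]
    have hsub : (sN:ℝ) - 1 ≥ M^2 * ((r:ℝ) - 1) := by
      have : (sN:ℝ) = M^2 * (r:ℝ) := by rw [hsN]; push_cast; ring
      nlinarith [sq_nonneg M]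
    have hM2pos : (0:ℝ) < M^2 := by positivity
    have hrlog : (r:ℝ) - 1 ≥ 4*(t:ℝ)*Real.log M + 4 := by
      have : Real.log M = Real.log m := by rw [hM]
      linarith
    have hlog4 : Real.log 4 ≤ 2 := log_four_le_two
    have htpos : (0:ℝ) ≤ (t:ℝ) := Nat.cast_nonneg t
    have hchain : (eN:ℝ)/Q ≥ (sN:ℝ) * ((r:ℝ)-1) / 2 := by
      rw [heNcast, hQ]
      rw [ge_iff_le, div_le_div_iff₀ (by norm_num) (by positivity)]
      have h1 : (sN:ℝ) * (M^2*((r:ℝ)-1)) ≤ (sN:ℝ) * ((sN:ℝ)-1) := by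
        apply mul_le_mul_of_nonneg_left hsub (by linarith)
      nlinarith
    have hfin : (sN:ℝ) * ((r:ℝ)-1) / 2 ≥ Real.log 4 + (2*sN:ℕ) * ((t:ℕ) * Real.log M) := by
      push_cast
      have h1 : (sN:ℝ) * ((r:ℝ)-1) ≥ (sN:ℝ) * (4*(t:ℝ)*Real.log M + 4) :=
        mul_le_mul_of_nonneg_left hrlog (by linarith)
      nlinarith
    linarith
  -- combine
  have hQQ : Real.exp ((eN:ℝ)/Q) ≤ (Q/(Q-1))^eN := by
    have h1 : Real.exp ((eN:ℝ)/Q) = (Real.exp (1/Q))^eN := by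
      rw [← Real.exp_nat_mul]
      congr 1
      field_simp
    rw [h1]
    exact pow_le_pow_left₀ (Real.exp_nonneg _) key1 eN
  calc 4 * (M^t)^(2*sN) * (Q-1)^eN ≤ (Q/(Q-1))^eN * (Q-1)^eN := by
        apply mul_le_mul_of_nonneg_right (le_trans key2 hQQ) (by positivity)
    _ = Q^eN := by
        rw [← mul_pow, div_mul_cancel₀]
        linarith



lemma maxAcyclic_le {V : Type*} [Fintype V] (A : V → V → Prop) (b : ℕ)
    (hb : ∀ S : Finset V, AcyclicSet A ↑S → S.card ≤ b) : maxAcyclic A ≤ b := by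
  apply csSup_le'
  rintro k ⟨S, hS, rfl⟩
  exact hb S hS

lemma maxAcyclic_le_card {V : Type*} [Fintype V] (A : V → V → Prop) :
    maxAcyclic A ≤ Fintype.card V :=
  maxAcyclic_le A _ (fun S _ => Finset.card_le_univ S)

lemma H1_of (m t cT : ℕ) (hm : 1 ≤ m) (ht : 3 ≤ t) (hcT : 2 * cT = t * (t - 1)) :
    8 * (m^t)^(t-1) ≤ (2*m^2)^cT := by
  rw [← Nat.pow_le_pow_iff_left (n := 2) (by norm_num)]
  have h1 : (8 * (m^t)^(t-1))^2 = 64 * m^(2*(t*(t-1))) := by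
    rw [mul_pow, ← pow_mul, ← pow_mul]
    ring_nf
  have h2 : ((2*m^2)^cT)^2 = 2^(t*(t-1)) * m^(2*(t*(t-1))) := by
    rw [← pow_mul, mul_comm cT 2, hcT, mul_pow, ← pow_mul]
  rw [h1, h2]
  apply Nat.mul_le_mul_right
  have h6 : 6 ≤ t*(t-1) := by
    have h2' : 2 ≤ t - 1 := by omega
    calc (6:ℕ) = 3*2 := by norm_num
      _ ≤ t*(t-1) := Nat.mul_le_mul ht h2'
  calc (64:ℕ) = 2^6 := by norm_num
    _ ≤ 2^(t*(t-1)) := Nat.pow_le_pow_right (by norm_num) h6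



lemma eventually_log_le (a b δ : ℝ) (hδ : 0 < δ) :
    ∀ᶠ x : ℝ in atTop, a * Real.log x + b ≤ x ^ δ := by
  have h1 : (fun x : ℝ => a * Real.log x + b) =o[atTop] fun x : ℝ => x ^ δ := by
    apply Asymptotics.IsLittleO.add
    · exact (isLittleO_log_rpow_atTop hδ).const_mul_left a
    · rw [Asymptotics.isLittleO_const_left]
      right
      have h2 : Filter.Tendsto (fun x : ℝ => |x ^ δ|) atTop atTop :=
        tendsto_abs_atTop_atTop.comp (tendsto_rpow_atTop hδ)
      exact h2.congr (fun x => by simp [Function.comp, Real.norm_eq_abs])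
  have h2 := h1.def one_pos
  filter_upwards [h2, Filter.eventually_ge_atTop (0:ℝ)] with x hx hx0
  have h3 := le_abs_self (a * Real.log x + b)
  rw [Real.norm_eq_abs, Real.norm_eq_abs, one_mul] at hx
  have habs : |x ^ δ| = x ^ δ := abs_of_nonneg (Real.rpow_nonneg hx0 δ)
  linarith

lemma eventually_nat (a b δ : ℝ) (hδ : 0 < δ) :
    ∀ᶠ m : ℕ in atTop, a * Real.log m + b ≤ (m:ℝ) ^ δ :=
  tendsto_natCast_atTop_atTop.eventually (eventually_log_le a b δ hδ)


end St10

/-- If `T` is a tournament on `t ≥ 3` vertices and `ε > 0` is such that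
every `n`-vertex `T`-free oriented graph has an acyclic set of size at least `n^ε`,
then `ε ≤ 2/t`. -/
theorem stmt10 (t : ℕ) (ht : 3 ≤ t) (T : Fin t → Fin t → Prop)
    (hT1 : ∀ u v, T u v → ¬ T v u) (hT2 : ∀ u v : Fin t, u ≠ v → T u v ∨ T v u)
    (ε : ℝ) (hε : 0 < ε)
    (h : ∀ (n : ℕ) (A : Fin n → Fin n → Prop),
      (∀ u v, A u v → ¬ A v u) →
      (¬ ∃ g : Fin t → Fin n, Function.Injective g ∧ ∀ i j, T i j → A (g i) (g j)) →
      (n : ℝ) ^ ε ≤ (maxAcyclic A : ℝ)) :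
    ε ≤ 2 / t := by
  classical
  by_contra hcon2
  push_neg at hcon2
  have ht0 : 0 < t := by omega
  have htR : (0:ℝ) < t := by exact_mod_cast ht0
  have hδpos : 0 < (t:ℝ) * ε - 2 := by
    have h2 : 2 < ε * t := (div_lt_iff₀ htR).mp hcon2
    linarith
  set δ := (t:ℝ) * ε - 2 with hδdef
  -- Step 1: ε ≤ 1
  have hε1 : ε ≤ 1 := by
    have hfree : ¬ ∃ g : Fin t → Fin 2, Function.Injective g ∧
        ∀ i j, T i j → (fun _ _ : Fin 2 => False) (g i) (g j) := by
      rintro ⟨g, -, harc⟩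
      have hne : (⟨0, by omega⟩ : Fin t) ≠ ⟨1, by omega⟩ := by
        intro he
        rw [Fin.mk.injEq] at he
        omega
      rcases hT2 _ _ hne with hT | hT
      · exact harc _ _ hT
      · exact harc _ _ hT
    have happ := h 2 (fun _ _ => False) (fun _ _ hf => hf.elim) hfree
    have hma : (maxAcyclic (fun _ _ : Fin 2 => False) : ℝ) ≤ 2 := by
      have h2 := St10.maxAcyclic_le_card (fun _ _ : Fin 2 => False)
      rw [Fintype.card_fin] at h2
      exact_mod_cast h2
    have hcast2 : ((2:ℕ):ℝ) = (2:ℝ) := by norm_num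
    rw [hcast2] at happ
    have h2e : (2:ℝ) ^ ε ≤ (2:ℝ) ^ (1:ℝ) := by
      rw [Real.rpow_one]
      exact le_trans happ hma
    exact (Real.rpow_le_rpow_left_iff (by norm_num)).mp h2e
  -- Step 2: choose m large
  obtain ⟨m, hE1, hE2, hm2⟩ :=
    ((St10.eventually_nat (8*t) 14 δ hδpos).and
      ((St10.eventually_nat (4*t) 7 1 one_pos).and (Filter.eventually_ge_atTop 2))).exists
  have hm1 : 1 ≤ m := by omega
  have hmR1 : (1:ℝ) ≤ (m:ℝ) := by exact_mod_cast hm1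
  have hmpos : (0:ℝ) < (m:ℝ) := by linarith
  have hlog0 : 0 ≤ Real.log m := Real.log_nonneg hmR1
  have htc0 : (0:ℝ) ≤ (t:ℝ) := Nat.cast_nonneg t
  set x := 4*(t:ℝ)*Real.log m with hxdef
  have hx0 : 0 ≤ x := by
    rw [hxdef]
    exact mul_nonneg (mul_nonneg (by norm_num) htc0) hlog0
  set r := ⌈x⌉₊ + 6 with hrdef
  have hr_lb : x + 6 ≤ (r:ℝ) := by
    rw [hrdef]
    push_cast
    have := Nat.le_ceil x
    linarith
  have hr_ub : (r:ℝ) ≤ x + 7 := by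
    rw [hrdef]
    push_cast
    have := Nat.ceil_lt_add_one hx0
    linarith
  have hrm : r ≤ m := by
    have h2 : (r:ℝ) ≤ (m:ℝ) := by
      have h3 := hE2
      rw [Real.rpow_one] at h3
      calc (r:ℝ) ≤ x + 7 := hr_ub
        _ ≤ (m:ℝ) := h3
    exact_mod_cast h2
  have hr1 : 1 ≤ r := by omega
  -- parameters
  set nn := m^t with hnndef
  set q := 2*m^2 with hqdef
  set sv := m^2*r with hsvdef
  have hq : 2 ≤ q := by
    rw [hqdef]
    nlinarith
  have hmpos' : 0 < m := by omega
  have hn : 0 < nn := by rw [hnndef]; exact pow_pos hmpos' t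
  have htn : t ≤ nn := by
    rw [hnndef]
    exact le_trans (Nat.le_of_lt (Nat.lt_two_pow_self (n := t))) (Nat.pow_le_pow_left hm2 t)
  have hsv1 : 1 ≤ sv := by
    rw [hsvdef]
    exact Nat.one_le_iff_ne_zero.mpr (Nat.mul_ne_zero (by positivity) (by omega))
  have hsn : sv ≤ nn := by
    rw [hsvdef, hnndef]
    calc m^2*r ≤ m^2*m := Nat.mul_le_mul_left _ hrm
      _ = m^3 := by ring
      _ ≤ m^t := Nat.pow_le_pow_right hm1 ht
  have hH1 : 8 * nn^(t-1) ≤ q ^ (St10.ltpairs t).card := by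
    rw [hnndef, hqdef]
    exact St10.H1_of m t _ hm1 ht (St10.two_mul_ltpairs t)
  have hr5 : 4*(t:ℝ)*Real.log m + 5 ≤ (r:ℝ) := by
    rw [← hxdef]
    linarith
  have hH2 : 2 * nn^sv * (q-1) ^ (St10.ltpairs sv).card ≤ q ^ (St10.ltpairs sv).card := by
    rw [hnndef, hqdef, hsvdef]
    exact St10.H2_of m t r _ hm2 (by omega) hr1 hr5 (by rw [← hsvdef]; exact St10.two_mul_ltpairs sv)
  obtain ⟨ω, hg1, hg2⟩ := St10.good_omega nn t sv q hq hn htn hsn (by omega) T hT2 hH1 hH2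
  -- Step 3: deletion
  set z0 : Fin t := ⟨0, ht0⟩ with hz0
  set Cop := Finset.univ.filter (fun g : Fin t → Fin nn => Function.Injective g ∧
      ∀ i j, T i j → St10.Arc hq ω (g i) (g j)) with hCop
  set D := Cop.image (fun g => g z0) with hD
  set R := (Finset.univ : Finset (Fin nn)) \ D with hR
  set n' := R.card with hn'def
  have hDle : D.card ≤ Cop.card := Finset.card_image_le
  have hn'eq : n' = nn - D.card := by
    rw [hn'def, hR, Finset.card_sdiff_of_subset (Finset.subset_univ _), Finset.card_univ, Fintype.card_fin]
  have hg2' : 2 * Cop.card < nn := hg2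
  have h2n' : nn ≤ 2*n' := by
    have h1 : 2*D.card < nn := lt_of_le_of_lt (Nat.mul_le_mul_left 2 hDle) hg2'
    omega
  have hn'le : D.card ≤ nn := by omega
  -- the quotient graph
  have hecard : Fintype.card {y // y ∈ R} = n' := by rw [Fintype.card_coe]
  set e : {y // y ∈ R} ≃ Fin n' := Fintype.equivFinOfCardEq hecard with he
  set φ : Fin n' → Fin nn := fun a => ((e.symm a : {y // y ∈ R}) : Fin nn) with hφdef
  have hφ : Function.Injective φ :=
    Function.Injective.comp Subtype.val_injective e.symm.injective
  set A' : Fin n' → Fin n' → Prop := fun a b => St10.Arc hq ω (φ a) (φ b) with hA'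
  have hasym : ∀ u v, A' u v → ¬ A' v u := fun u v h1 h2 =>
    St10.arc_asymm hq ω _ _ h1 h2
  have htfree : ¬ ∃ g : Fin t → Fin n', Function.Injective g ∧
      ∀ i j, T i j → A' (g i) (g j) := by
    rintro ⟨g, hginj, hgarc⟩
    have hginj' : Function.Injective (fun i => φ (g i)) := hφ.comp hginj
    have hgCop : (fun i => φ (g i)) ∈ Cop := by
      rw [hCop, Finset.mem_filter]
      exact ⟨Finset.mem_univ _, hginj', fun i j hTij => hgarc i j hTij⟩
    have hD' : φ (g z0) ∈ D := by
      rw [hD]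
      exact Finset.mem_image.mpr ⟨_, hgCop, rfl⟩
    have hR' : φ (g z0) ∈ R := (e.symm (g z0)).2
    rw [hR, Finset.mem_sdiff] at hR'
    exact hR'.2 hD'
  have hmax : maxAcyclic A' ≤ sv - 1 := by
    apply St10.maxAcyclic_le
    intro S' hS'
    by_contra hltc
    push_neg at hltc
    have hcard : sv ≤ S'.card := by omega
    have himg : AcyclicSet (St10.Arc hq ω) ↑(S'.image φ) := by
      have h4 := St10.acyclic_image (St10.Arc hq ω) A' φ hφ (fun a b hab => hab) ↑S' hS'
      rwa [← Finset.coe_image] at h4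
    have hcard2 : sv ≤ (S'.image φ).card := by
      rw [Finset.card_image_of_injective _ hφ]
      exact hcard
    obtain ⟨U, hUsub, hUcard⟩ := Finset.exists_subset_card_eq hcard2
    have hUac : AcyclicSet (St10.Arc hq ω) ↑U :=
      St10.acyclic_subset _ (Finset.coe_subset.mpr hUsub) himg
    obtain ⟨v, hvinj, hvmem, hvtopo⟩ := St10.exists_topo (St10.Arc hq ω) sv U hUcard hUac
    exact hg1 ⟨v, hvinj, hvtopo⟩
  have happly := h n' A' hasym htfree
  -- Step 4: numeric contradiction
  have hn'R : ((nn:ℝ)/2) ≤ (n':ℝ) := by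
    have h5 : (nn:ℝ) ≤ 2*(n':ℝ) := by exact_mod_cast h2n'
    linarith
  have hmono : ((nn:ℝ)/2)^ε ≤ (n':ℝ)^ε :=
    Real.rpow_le_rpow (by positivity) hn'R (le_of_lt hε)
  have h2eps : (0:ℝ) < (2:ℝ)^ε := Real.rpow_pos_of_pos two_pos ε
  have h2le : (2:ℝ)^ε ≤ 2 := by
    calc (2:ℝ)^ε ≤ (2:ℝ)^(1:ℝ) := Real.rpow_le_rpow_of_exponent_le one_le_two hε1
      _ = 2 := Real.rpow_one 2
  have hnnR : (nn:ℝ) = (m:ℝ)^(t:ℕ) := by rw [hnndef]; push_cast; ring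
  have he1 : ((nn:ℝ))^ε = (m:ℝ)^((t:ℝ)*ε) := by
    rw [hnnR, ← Real.rpow_natCast (m:ℝ) t, ← Real.rpow_mul (le_of_lt hmpos)]
  have he2 : (m:ℝ)^((t:ℝ)*ε) = (m:ℝ)^(2:ℝ) * (m:ℝ)^δ := by
    rw [← Real.rpow_add hmpos]
    congr 1
    rw [hδdef]
    ring
  have he3 : (m:ℝ)^(2:ℝ) = (m:ℝ)^(2:ℕ) := by
    rw [← Real.rpow_natCast (m:ℝ) 2]
    norm_num
  have hsvR : (sv:ℝ) = (m:ℝ)^(2:ℕ) * (r:ℝ) := by rw [hsvdef]; push_cast; ring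
  have hE1' : 2*(x+7) ≤ (m:ℝ)^δ := by
    rw [hxdef]
    have := hE1
    linarith
  have hkey : (sv:ℝ) * (2:ℝ)^ε ≤ ((nn:ℝ))^ε := by
    rw [he1, he2, he3, hsvR]
    have hmsq : (0:ℝ) ≤ (m:ℝ)^(2:ℕ) := by positivity
    have hr0 : (0:ℝ) ≤ (r:ℝ) := Nat.cast_nonneg r
    have hstep : (r:ℝ)*(2:ℝ)^ε ≤ (m:ℝ)^δ := by
      calc (r:ℝ)*(2:ℝ)^ε ≤ (r:ℝ)*2 := mul_le_mul_of_nonneg_left h2le hr0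
        _ ≤ (x+7)*2 := by nlinarith
        _ = 2*(x+7) := by ring
        _ ≤ (m:ℝ)^δ := hE1'
    calc (m:ℝ)^(2:ℕ) * (r:ℝ) * (2:ℝ)^ε = (m:ℝ)^(2:ℕ) * ((r:ℝ) * (2:ℝ)^ε) := by ring
      _ ≤ (m:ℝ)^(2:ℕ) * ((m:ℝ)^δ) := mul_le_mul_of_nonneg_left hstep hmsq
  have hfin1 : (sv:ℝ) ≤ ((nn:ℝ)/2)^ε := by
    rw [Real.div_rpow (Nat.cast_nonneg nn) (by norm_num : (0:ℝ) ≤ 2), le_div_iff₀ h2eps]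
    exact hkey
  have hmaxR : (maxAcyclic A' : ℝ) ≤ (sv:ℝ) - 1 := by
    calc (maxAcyclic A' : ℝ) ≤ ((sv - 1:ℕ):ℝ) := by exact_mod_cast hmax
      _ = (sv:ℝ) - 1 := by rw [Nat.cast_sub hsv1]; norm_num
  linarith [happly, hmono, hfin1, hmaxR]
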